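/- For every n ≥ 2, X_n < 2n·X_{n−1}. -/

import Mathlib

/-- The sequence `X_n` counting equivalence classes of circular planar electrical networks:
`X_1 = 1` and, for `n ≥ 2`,
`X_n = 2(n-1) X_{n-1} + ∑_{j=2}^{n-2} (j-1) X_j X_{n-j}` (the sum being empty for `n ≤ 3`;
here it is written over the attached index set to establish termination). -/
def X : ℕ → ℕ
  | 0 => 1
  | 1 => 1
  | n + 2 =>
      2 * (n + 1) * X (n + 1) +
        ∑ j ∈ (Finset.Icc 2 n).attach, (j.1 - 1) * X j.1 * X (n + 2 - j.1)
decreasing_by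
  · exact Nat.lt_succ_self (n + 1)
  · have := j.2; rw [Finset.mem_Icc] at this; omega
  · have := j.2; rw [Finset.mem_Icc] at this; omega

lemma X_eq (n : ℕ) : X (n+2) = 2 * (n + 1) * X (n + 1) +
    ∑ j ∈ Finset.Icc 2 n, (j - 1) * X j * X (n + 2 - j) := by
  rw [X, Finset.sum_attach (Finset.Icc 2 n) (fun j => (j - 1) * X j * X (n + 2 - j))]

lemma X_lower (n : ℕ) : 2 * (n+1) * X (n+1) ≤ X (n+2) := by
  rw [X_eq]; exact Nat.le_add_right _ _

lemma X_pos (n : ℕ) : 0 < X n := by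
  induction n using Nat.strong_induction_on with
  | _ n ih =>
    match n with
    | 0 => simp [X]
    | 1 => simp [X]
    | n+2 =>
      have h := ih (n+1) (by omega)
      calc 0 < 2*(n+1)*X (n+1) := by positivity
        _ ≤ X (n+2) := X_lower n

lemma X_one : X 1 = 1 := by rw [X]
lemma X_two : X 2 = 2 := by rw [X_eq]; simp [X_one]
lemma X_three : X 3 = 8 := by rw [X_eq]; simp [X_two]

/-- Key pointwise bound: assuming the main inequality (weakly) holds up to `K`,
`X a * X b ≤ 8 * X (a+b-3)` for `a, b ≥ 3` with `a ≤ K`. -/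
lemma X_key (K : ℕ) (hU : ∀ k, 2 ≤ k → k ≤ K → X k ≤ 2*k*X (k-1)) :
    ∀ a, 3 ≤ a → a ≤ K → ∀ b, 3 ≤ b → X a * X b ≤ 8 * X (a+b-3) := by
  intro a
  induction a using Nat.strong_induction_on with
  | _ a ih =>
    intro ha3 haK b hb3
    rcases eq_or_lt_of_le ha3 with h | h
    · rw [← h, X_three, show 3+b-3 = b from by omega]
    · rcases eq_or_lt_of_le hb3 with hb | hb
      · rw [← hb, X_three, show a+3-3 = a from by omega, Nat.mul_comm]
      · -- a, b ≥ 4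
        have h1 : X a ≤ 2*a*X (a-1) := hU a (by omega) haK
        have h2 : X (a-1) * X b ≤ 8 * X (a-1+b-3) :=
          ih (a-1) (by omega) (by omega) (by omega) b hb3
        rw [show a-1+b-3 = a+b-4 from by omega] at h2
        have h3 : 2*(a+b-4) * X (a+b-4) ≤ X (a+b-3) := by
          have h := X_lower (a+b-5)
          rw [show a+b-5+1 = a+b-4 from by omega, show a+b-5+2 = a+b-3 from by omega] at h
          exact h
        calc X a * X b ≤ (2*a*X (a-1)) * X b := Nat.mul_le_mul_right _ h1
          _ = 2*a*(X (a-1) * X b) := by ring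
          _ ≤ 2*a*(8 * X (a+b-4)) := Nat.mul_le_mul_left _ h2
          _ = 8*(2*a*X (a+b-4)) := by ring
          _ ≤ 8*(2*(a+b-4)*X (a+b-4)) := by
              have : 2*a ≤ 2*(a+b-4) := by omega
              exact Nat.mul_le_mul_left _ (Nat.mul_le_mul_right _ this)
          _ ≤ 8 * X (a+b-3) := Nat.mul_le_mul_left _ h3

/-- For every `n ≥ 2`, `X_n < 2n·X_{n-1}`. -/
theorem X_lt_two_mul (n : ℕ) (hn : 2 ≤ n) : X n < 2 * n * X (n - 1) := by
  revert hn
  induction n using Nat.strong_induction_on with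
  | _ n ih =>
    intro hn
    obtain ⟨m, rfl⟩ : ∃ m, n = m + 2 := ⟨n - 2, by omega⟩
    rcases m with _ | _ | _ | d
    · show X 2 < 2*2*X 1
      rw [X_two, X_one]; norm_num
    · show X 3 < 2*3*X 2
      rw [X_three, X_two]; norm_num
    · show X 4 < 2*4*X 3
      rw [show (4:ℕ) = 2+2 from rfl, X_eq, show Finset.Icc 2 2 = {2} from rfl]
      simp [X_two, X_three]
    -- main case n = d+5
    have hU : ∀ k, 2 ≤ k → k ≤ d+4 → X k ≤ 2*k*X (k-1) := fun k hk2 hkle =>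
      le_of_lt (ih k (by omega) hk2)
    show X (d+3+2) < 2*(d+3+2)*X (d+3+2-1)
    rw [X_eq, show d+3+2 = d+5 from by omega, show d+3+1 = d+4 from by omega,
      show d+5-1 = d+4 from by omega]
    -- goal: 2*(d+4)*X (d+4) + S < 2*(d+5)*X (d+4)
    have hS : (∑ j ∈ Finset.Icc 2 (d+3), (j - 1) * X j * X (d+5 - j)) < 2 * X (d+4) := by
      -- symmetry: 2*S = (d+3)*Q
      have refl1 : ∀ f : ℕ → ℕ, ∑ j ∈ Finset.Icc 2 (d+3), f j
          = ∑ j ∈ Finset.Icc 2 (d+3), f (d+5-j) := by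
        intro f
        refine Finset.sum_nbij' (fun j => d+5-j) (fun j => d+5-j) ?_ ?_ ?_ ?_ ?_ <;>
          simp only [Finset.mem_Icc] <;> intro a ha
        · omega
        · omega
        · omega
        · omega
        · congr 1; omega
      have h1 : (∑ j ∈ Finset.Icc 2 (d+3), (j - 1) * X j * X (d+5 - j))
          = ∑ j ∈ Finset.Icc 2 (d+3), (d+4-j) * (X j * X (d+5-j)) := by
        rw [refl1 (fun j => (j - 1) * X j * X (d+5 - j))]
        apply Finset.sum_congr rfl
        intro j hj
        simp only [Finset.mem_Icc] at hj
        rw [show d+5-(d+5-j) = j from by omega, show d+5-j-1 = d+4-j from by omega]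
        ring
      have h2 : 2 * (∑ j ∈ Finset.Icc 2 (d+3), (j - 1) * X j * X (d+5 - j))
          = (d+3) * ∑ j ∈ Finset.Icc 2 (d+3), X j * X (d+5-j) := by
        rw [two_mul]
        nth_rewrite 2 [h1]
        rw [← Finset.sum_add_distrib, Finset.mul_sum]
        apply Finset.sum_congr rfl
        intro j hj
        simp only [Finset.mem_Icc] at hj
        rw [mul_assoc, ← add_mul]
        congr 1
        omega
      -- bound Q
      have hQ : (∑ j ∈ Finset.Icc 2 (d+3), X j * X (d+5-j))
          ≤ 4 * X (d+3) + 8*d*X (d+2) := by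
        rw [← Finset.Ico_add_one_right_eq_Icc, show d+3+1 = d+4 from by omega]
        rw [Finset.sum_eq_sum_Ico_succ_bot (by omega : 2 < d+4)]
        rw [show d+4 = (d+3)+1 from by omega,
          Finset.sum_Ico_succ_top (by omega : 3 ≤ d+3)]
        have hmid : (∑ j ∈ Finset.Ico 3 (d+3), X j * X (d+5-j)) ≤ d * (8 * X (d+2)) := by
          have := Finset.sum_le_card_nsmul (Finset.Ico 3 (d+3))
            (fun j => X j * X (d+5-j)) (8 * X (d+2)) ?_
          · simpa [Nat.card_Ico, smul_eq_mul] using this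
          · intro j hj
            simp only [Finset.mem_Ico] at hj
            have := X_key (d+4) hU j (by omega) (by omega) (d+5-j) (by omega)
            rw [show j+(d+5-j)-3 = d+2 from by omega] at this
            exact this
        have ht2 : X 2 * X (d+5-2) = 2 * X (d+3) := by
          rw [X_two, show d+5-2 = d+3 from by omega]
        have htm : X (d+3) * X (d+5-(d+3)) = 2 * X (d+3) := by
          rw [show d+5-(d+3) = 2 from by omega, X_two, Nat.mul_comm]
        rw [ht2, htm]
        calc 2 * X (d+3) + ((∑ j ∈ Finset.Ico 3 (d+3), X j * X (d+5-j)) + 2 * X (d+3))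
            ≤ 2 * X (d+3) + (d * (8 * X (d+2)) + 2 * X (d+3)) := by
              exact Nat.add_le_add_left (Nat.add_le_add_right hmid _) _
          _ = 4 * X (d+3) + 8*d*X (d+2) := by ring
      -- finish: 2*S ≤ (d+3)*(4*X(d+3) + 8d*X(d+2)) < 4*X(d+4)
      have hA : 2*(d+3)*X (d+3) ≤ X (d+4) := by
        have h := X_lower (d+2)
        rw [show d+2+1 = d+3 from by omega, show d+2+2 = d+4 from by omega] at h
        exact h
      have hB : 2*(d+2)*X (d+2) ≤ X (d+3) := by
        have h := X_lower (d+1)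
        rw [show d+1+1 = d+2 from by omega, show d+1+2 = d+3 from by omega] at h
        exact h
      have hC : 1 ≤ X (d+2) := X_pos (d+2)
      nlinarith [h2, hQ, hA, hB, hC, Nat.mul_le_mul_left (d+3) hB,
        Nat.mul_le_mul_left 2 hA]
    nlinarith [hS, X_pos (d+4)]
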